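/- Let n ≥ 11 and d = n − (2k−1) for some positive integer k, with 3 ≤ d ≤ n−7. Then the number of maximal unrefinable partitions of T_n − d equals 1 + D(k), where D(k) is the number of partitions of k into distinct parts (with at least two parts). -/

import Mathlib

/-- The n-th triangular number. -/
def T (n : ℕ) : ℕ := n * (n + 1) / 2

/-- A partition of `N` into distinct parts, represented as a finite set of
positive integers with at least two elements summing to `N`. -/
def DistinctPartition (N : ℕ) (S : Finset ℕ) : Prop :=
  (∀ x ∈ S, 0 < x) ∧ 2 ≤ S.card ∧ S.sum id = N

/-- The missing parts: integers in `{1, …, λ_t}` not appearing in the partition. -/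
def Missing (S : Finset ℕ) : Finset ℕ := Finset.Icc 1 (S.sup id) \ S

/-- No part is the sum of two distinct missing parts. -/
def Unrefinable (S : Finset ℕ) : Prop :=
  ∀ a ∈ Missing S, ∀ b ∈ Missing S, a ≠ b → a + b ∉ S

def UnrefinablePartition (N : ℕ) (S : Finset ℕ) : Prop :=
  DistinctPartition N S ∧ Unrefinable S

/-- A maximal unrefinable partition: its largest part is maximal among the
largest parts of all unrefinable partitions of `N`. -/
def MaximalUnrefinable (N : ℕ) (S : Finset ℕ) : Prop :=
  UnrefinablePartition N S ∧
    ∀ S' : Finset ℕ, UnrefinablePartition N S' → S'.sup id ≤ S.sup id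

open Finset

lemma two_T (n : ℕ) : 2 * T n = n * (n + 1) := by
  have h : 2 ∣ n * (n + 1) := (Nat.even_mul_succ_self n).two_dvd
  unfold T; omega

lemma T_add_one (n : ℕ) : T (n+1) = T n + (n+1) := by
  have e1 := two_T n
  have e2 := two_T (n+1)
  have e3 : (n+1) * (n+1+1) = n * (n+1) + 2*(n+1) := by ring
  rw [e3] at e2; omega

lemma sum_Icc_id (n : ℕ) : ∑ x ∈ Icc 1 n, x = T n := by
  induction n with
  | zero => simp [T]
  | succ n ih => rw [Finset.sum_Icc_succ_top (by omega), T_add_one, ih]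

section bound
variable {m k : ℕ} (hm : 2*k ≤ m) (hk : 4 ≤ k)

include hm hk in
lemma sup_le_two_m {S : Finset ℕ} (h : UnrefinablePartition (T m + m + 2*k) S) :
    S.sup id ≤ 2*m := by
  by_contra hc
  push_neg at hc
  set s := S.sup id with hs
  obtain ⟨⟨hSpos, hScard, hSsum⟩, hSunref⟩ := h
  have hne : S.Nonempty := Finset.card_pos.mp (by omega)
  have hsS : s ∈ S := by
    obtain ⟨b, hb, hbe⟩ := Finset.exists_mem_eq_sup S hne id
    rw [hs, hbe]; exact hb
  have pair : ∀ a ∈ Icc 1 m, a ∈ S ∨ s - a ∈ S := by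
    intro a ha
    simp only [mem_Icc] at ha
    by_contra hcon
    push_neg at hcon
    have h1 : a ∈ Missing S := by
      rw [Missing, mem_sdiff, mem_Icc]
      exact ⟨⟨ha.1, by omega⟩, hcon.1⟩
    have h2 : s - a ∈ Missing S := by
      rw [Missing, mem_sdiff, mem_Icc]
      exact ⟨⟨by omega, by omega⟩, hcon.2⟩
    have h3 : a ≠ s - a := by omega
    have := hSunref a h1 (s - a) h2 h3
    have he : a + (s - a) = s := by omega
    rw [he] at this
    exact this hsS
  set h' : ℕ → ℕ := fun a => if a ∈ S then a else s - a with hh'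
  have himg : ∀ a ∈ Icc 1 m, h' a ∈ S ∧ a ≤ h' a ∧ h' a < s := by
    intro a ha
    have hab := ha
    simp only [mem_Icc] at hab
    by_cases hc1 : a ∈ S
    · simp only [hh', if_pos hc1]
      exact ⟨hc1, le_refl a, by omega⟩
    · simp only [hh', if_neg hc1]
      have := (pair a ha).resolve_left hc1
      exact ⟨this, by omega, by omega⟩
  have hinj : ∀ a ∈ Icc 1 m, ∀ b ∈ Icc 1 m, h' a = h' b → a = b := by
    intro a ha b hb hab
    have ha' := ha; have hb' := hb
    simp only [mem_Icc] at ha' hb'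
    simp only [hh'] at hab
    split_ifs at hab <;> omega
  have hsub : insert s ((Icc 1 m).image h') ⊆ S := by
    intro x hx
    rcases Finset.mem_insert.mp hx with rfl | hx
    · exact hsS
    · obtain ⟨a, ha, rfl⟩ := Finset.mem_image.mp hx
      exact (himg a ha).1
  have hnotmem : s ∉ (Icc 1 m).image h' := by
    intro hcon
    obtain ⟨a, ha, hae⟩ := Finset.mem_image.mp hcon
    have := (himg a ha).2.2
    omega
  have hle : ∑ x ∈ insert s ((Icc 1 m).image h'), x ≤ ∑ x ∈ S, x :=
    Finset.sum_le_sum_of_subset hsub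
  rw [Finset.sum_insert hnotmem, Finset.sum_image hinj] at hle
  have hge : ∑ a ∈ Icc 1 m, a ≤ ∑ a ∈ Icc 1 m, h' a :=
    Finset.sum_le_sum (fun a ha => (himg a ha).2.1)
  rw [sum_Icc_id] at hge
  have : S.sum id = ∑ x ∈ S, x := rfl
  omega

end bound

def famP (m : ℕ) (P : Finset ℕ) : Finset ℕ :=
  ((Icc 1 (m-1)) \ P.image (fun a => m - a)) ∪ P.image (fun a => m + a) ∪ {2*m}

section fam
variable {m k : ℕ} {P : Finset ℕ} (hm : 2*k ≤ m) (hk : 4 ≤ k)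
  (hpos : ∀ a ∈ P, 0 < a) (hsum : ∑ a ∈ P, a = k)

include hpos hsum in
lemma hble : ∀ a ∈ P, 1 ≤ a ∧ a ≤ k := by
  intro a ha
  refine ⟨hpos a ha, ?_⟩
  rw [← hsum]
  exact Finset.single_le_sum (f := fun x => x) (fun i _ => Nat.zero_le i) ha

include hsum in
lemma two_parts_le {a b : ℕ} (ha : a ∈ P) (hb : b ∈ P) (hab : a ≠ b) : a + b ≤ k := by
  have hsub : ({a, b} : Finset ℕ) ⊆ P := by
    intro x hx; simp only [mem_insert, mem_singleton] at hx
    rcases hx with rfl | rfl <;> assumption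
  have := Finset.sum_le_sum_of_subset (f := fun x => x) hsub
  rw [Finset.sum_pair hab, hsum] at this
  exact this

include hm hk hpos hsum in
lemma famP_sum : ∑ x ∈ famP m P, x = T m + m + 2*k := by
  have hb : ∀ a ∈ P, 1 ≤ a ∧ a ≤ k := hble hpos hsum
  have hsub : P.image (fun a => m - a) ⊆ Icc 1 (m-1) := by
    intro x hx
    simp only [mem_image] at hx
    obtain ⟨a, ha, rfl⟩ := hx
    have := hb a ha
    simp only [mem_Icc]; omega
  have e1 : ∑ x ∈ (Icc 1 (m-1) \ P.image (fun a => m - a)), x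
      + ∑ x ∈ P.image (fun a => m - a), x = T (m-1) := by
    rw [Finset.sum_sdiff hsub, sum_Icc_id]
  have e2 : ∑ x ∈ P.image (fun a => m - a), x = ∑ a ∈ P, (m - a) := by
    apply Finset.sum_image
    intro a ha b hb' h
    simp only at h
    have := hb a ha; have := hb b hb'
    omega
  have e2' : ∑ a ∈ P, (m - a) + k = P.card * m := by
    have : ∑ a ∈ P, (m - a) + ∑ a ∈ P, a = ∑ a ∈ P, m := by
      rw [← Finset.sum_add_distrib]
      apply Finset.sum_congr rfl
      intro a ha; have := hb a ha; omega
    rw [hsum] at this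
    simpa [Finset.sum_const, mul_comm] using this
  have e3 : ∑ x ∈ P.image (fun a => m + a), x = P.card * m + k := by
    rw [Finset.sum_image (by intro a _ b _ h; simp only at h; omega)]
    rw [Finset.sum_add_distrib, hsum]
    simp [Finset.sum_const, mul_comm]
  have d1 : Disjoint ((Icc 1 (m-1)) \ P.image (fun a => m - a)) (P.image (fun a => m + a)) := by
    rw [Finset.disjoint_left]
    intro x hx hx'
    simp only [mem_sdiff, mem_Icc] at hx
    simp only [mem_image] at hx'
    obtain ⟨a, ha, rfl⟩ := hx'
    have := hb a ha
    omega
  have d2 : Disjoint (((Icc 1 (m-1)) \ P.image (fun a => m - a)) ∪ P.image (fun a => m + a)) ({2*m} : Finset ℕ) := by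
    rw [Finset.disjoint_right]
    intro x hx hx'
    simp only [mem_singleton] at hx
    subst hx
    simp only [mem_union, mem_sdiff, mem_Icc, mem_image] at hx'
    rcases hx' with ⟨⟨h1, h2⟩, _⟩ | ⟨a, ha, h⟩
    · omega
    · have := hb a ha; omega
  unfold famP
  rw [Finset.sum_union d2, Finset.sum_union d1, e3, Finset.sum_singleton]
  have hm1 : m - 1 + 1 = m := by omega
  have e4 : T m = T (m-1) + m := by
    conv_lhs => rw [← hm1]
    rw [T_add_one (m-1), hm1]
  rw [e2] at e1
  generalize P.card * m = cm at *
  omega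

lemma famP_mem_iff {x : ℕ} : x ∈ famP m P ↔
    ((1 ≤ x ∧ x ≤ m - 1) ∧ ∀ a ∈ P, m - a ≠ x) ∨ (∃ a ∈ P, m + a = x) ∨ x = 2*m := by
  simp [famP, mem_union, mem_sdiff, mem_Icc, mem_image]
  exact or_rotate

lemma mem_famP_2m : 2*m ∈ famP m P := by
  rw [famP_mem_iff]; right; right; rfl

include hm hk hpos hsum in
lemma famP_sup : (famP m P).sup id = 2*m := by
  apply le_antisymm
  · apply Finset.sup_le
    intro x hx
    rw [famP_mem_iff] at hx
    rcases hx with ⟨⟨_, h⟩, _⟩ | ⟨a, ha, rfl⟩ | rfl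
    · simp only [id]; omega
    · have := hble hpos hsum a ha; simp only [id]; omega
    · simp
  · exact Finset.le_sup (f := id) mem_famP_2m

include hm hk hpos hsum in
lemma famP_missing_form {z : ℕ} (h1 : 1 ≤ z) (h2 : z ≤ 2*m) (hz : z ∉ famP m P) :
    (∃ a ∈ P, 1 ≤ a ∧ a ≤ k ∧ z = m - a) ∨ z = m ∨
      (m + 1 ≤ z ∧ z ≤ 2*m - 1 ∧ ∀ a ∈ P, m + a ≠ z) := by
  rw [famP_mem_iff] at hz
  push_neg at hz
  by_cases hc : z ≤ m - 1
  · left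
    obtain ⟨a, ha, hae⟩ := hz.1 ⟨h1, hc⟩
    have := hble hpos hsum a ha
    exact ⟨a, ha, this.1, this.2, hae.symm⟩
  · by_cases hc2 : z = m
    · right; left; exact hc2
    · right; right
      refine ⟨by omega, ?_, fun a ha => hz.2.1 a ha⟩
      have := hz.2.2; omega

include hm hk hpos hsum in
lemma famP_unrefinable (hmk : ¬(m = 2*k ∧ k ∈ P)) : Unrefinable (famP m P) := by
  intro x hx y hy hxy hS
  rw [Missing, famP_sup hm hk hpos hsum, mem_sdiff, mem_Icc] at hx hy
  obtain ⟨⟨hx1, hx2⟩, hxn⟩ := hx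
  obtain ⟨⟨hy1, hy2⟩, hyn⟩ := hy
  have fx := famP_missing_form hm hk hpos hsum hx1 hx2 hxn
  have fy := famP_missing_form hm hk hpos hsum hy1 hy2 hyn
  rw [famP_mem_iff] at hS
  have lbx : m - k ≤ x := by
    rcases fx with ⟨a, _, _, _, he⟩ | he | ⟨h, _, _⟩ <;> omega
  have lby : m - k ≤ y := by
    rcases fy with ⟨a, _, _, _, he⟩ | he | ⟨h, _, _⟩ <;> omega
  rcases hS with ⟨⟨_, hle⟩, _⟩ | ⟨c, hc, hce⟩ | h2m
  · -- x + y ≤ m - 1 : impossible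
    omega
  · -- x + y = m + c
    have hcb := hble hpos hsum c hc
    have hxm : x ≤ m := by
      rcases fx with ⟨a, _, _, _, he⟩ | he | ⟨h, _, _⟩ <;> omega
    have hym : y ≤ m := by
      rcases fy with ⟨a, _, _, _, he⟩ | he | ⟨h, _, _⟩ <;> omega
    have hck : c = k ∧ m = 2*k := by
      rcases fx with ⟨a, ha, ha1, hak, hea⟩ | hea | ⟨h, _, _⟩
      · rcases fy with ⟨b, hb, hb1, hbk, heb⟩ | heb | ⟨h', _, _⟩
        · have hab : a ≠ b := by omega
          have h2 := two_parts_le hsum ha hb hab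
          omega
        · omega
        · omega
      · rcases fy with ⟨b, hb, hb1, hbk, heb⟩ | heb | ⟨h', _, _⟩ <;> omega
      · omega
    exact hmk ⟨hck.2, hck.1 ▸ hc⟩
  · -- x + y = 2m
    rcases fx with ⟨a, ha, ha1, hak, hea⟩ | hea | ⟨h, hx2', hxne⟩
    · rcases fy with ⟨b, hb, hb1, hbk, heb⟩ | heb | ⟨h', hy2', hyne⟩
      · omega
      · omega
      · exact hyne a ha (by omega)
    · rcases fy with ⟨b, hb, hb1, hbk, heb⟩ | heb | ⟨h', hy2', hyne⟩ <;> omega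
    · rcases fy with ⟨b, hb, hb1, hbk, heb⟩ | heb | ⟨h', hy2', hyne⟩
      · exact hxne b hb (by omega)
      · omega
      · omega

end fam

section classify
variable {m k : ℕ} (hm : 2*k ≤ m) (hk : 4 ≤ k)

include hm hk in
lemma classify {S : Finset ℕ} (hS : UnrefinablePartition (T m + m + 2*k) S)
    (hsup : S.sup id = 2*m) :
    (m = 2*k ∧ S = Icc 1 m ∪ {2*m}) ∨
      ∃ P : Finset ℕ, (∀ a ∈ P, 0 < a) ∧ (∑ a ∈ P, a = k) ∧ S = famP m P ∧
        (2 ≤ P.card ∨ (P = {k} ∧ m ≠ 2*k)) := by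
  obtain ⟨⟨hpos, hcard, hsum⟩, hunref⟩ := hS
  have hne : S.Nonempty := Finset.card_pos.mp (by omega)
  have h2m : 2*m ∈ S := by
    obtain ⟨b, hb, hbe⟩ := Finset.exists_mem_eq_sup S hne id
    rw [hsup] at hbe; rw [hbe]; exact hb
  have hub : ∀ x ∈ S, x ≤ 2*m := by
    intro x hx
    have := Finset.le_sup (f := id) hx
    rw [hsup] at this; exact this
  -- pair lemma
  have pair : ∀ a, 1 ≤ a → a ≤ m - 1 → (a ∈ S ∨ 2*m - a ∈ S) := by
    intro a ha1 ha2
    by_contra hcon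
    push_neg at hcon
    have h1 : a ∈ Missing S := by
      rw [Missing, hsup, mem_sdiff, mem_Icc]; exact ⟨⟨ha1, by omega⟩, hcon.1⟩
    have h2 : 2*m - a ∈ Missing S := by
      rw [Missing, hsup, mem_sdiff, mem_Icc]; exact ⟨⟨by omega, by omega⟩, hcon.2⟩
    have := hunref a h1 (2*m - a) h2 (by omega)
    have he : a + (2*m - a) = 2*m := by omega
    rw [he] at this
    exact this h2m
  set h' : ℕ → ℕ := fun a => if a ∈ S then a else 2*m - a with hh'
  have hprop : ∀ a, 1 ≤ a → a ≤ m - 1 → h' a ∈ S ∧ a ≤ h' a ∧ 1 ≤ h' a ∧ h' a ≤ 2*m - 1 := by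
    intro a ha1 ha2
    by_cases hc : a ∈ S
    · simp only [hh', if_pos hc]; exact ⟨hc, le_refl a, by omega, by omega⟩
    · simp only [hh', if_neg hc]
      exact ⟨(pair a ha1 ha2).resolve_left hc, by omega, by omega, by omega⟩
  have hinj : ∀ a ∈ Icc 1 (m-1), ∀ b ∈ Icc 1 (m-1), h' a = h' b → a = b := by
    intro a ha b hb hab
    simp only [mem_Icc] at ha hb
    simp only [hh'] at hab
    split_ifs at hab <;> omega
  have hicc_sum : ∑ a ∈ Icc 1 (m-1), h' a ≥ T (m-1) := by
    rw [← sum_Icc_id (m-1)]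
    apply Finset.sum_le_sum
    intro a ha
    simp only [mem_Icc] at ha
    exact (hprop a ha.1 ha.2).2.1
  have h2mnotmem : 2*m ∉ (Icc 1 (m-1)).image h' := by
    intro hcon
    obtain ⟨a, ha, hae⟩ := Finset.mem_image.mp hcon
    simp only [mem_Icc] at ha
    have := (hprop a ha.1 ha.2).2.2.2
    omega
  have hbase : insert (2*m) ((Icc 1 (m-1)).image h') ⊆ S := by
    intro x hx
    rcases Finset.mem_insert.mp hx with rfl | hx
    · exact h2m
    · obtain ⟨a, ha, rfl⟩ := Finset.mem_image.mp hx
      simp only [mem_Icc] at ha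
      exact (hprop a ha.1 ha.2).1
  have hTm : T m = T (m-1) + m := by
    have h1 : m - 1 + 1 = m := by omega
    conv_lhs => rw [← h1]
    rw [T_add_one (m-1), h1]
  -- no pair is fully contained in S
  have bothEmpty : ∀ a, 1 ≤ a → a ≤ m - 1 → ¬(a ∈ S ∧ 2*m - a ∈ S) := by
    intro a0 ha1 ha2 ⟨haS, haS2⟩
    have hnotmem : 2*m - a0 ∉ insert (2*m) ((Icc 1 (m-1)).image h') := by
      intro hcon
      rcases Finset.mem_insert.mp hcon with he | hcon
      · omega
      · obtain ⟨b, hb, hbe⟩ := Finset.mem_image.mp hcon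
        simp only [mem_Icc] at hb
        simp only [hh'] at hbe
        split_ifs at hbe with hbS
        · omega
        · have hba : b = a0 := by omega
          rw [hba] at hbS
          exact hbS haS
    have hsub2 : insert (2*m - a0) (insert (2*m) ((Icc 1 (m-1)).image h')) ⊆ S := by
      intro x hx
      rcases Finset.mem_insert.mp hx with rfl | hx
      · exact haS2
      · exact hbase hx
    have hle : ∑ x ∈ insert (2*m - a0) (insert (2*m) ((Icc 1 (m-1)).image h')), x
        ≤ ∑ x ∈ S, x := Finset.sum_le_sum_of_subset hsub2
    rw [Finset.sum_insert hnotmem, Finset.sum_insert h2mnotmem,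
      Finset.sum_image hinj] at hle
    have hSid : S.sum id = ∑ x ∈ S, x := rfl
    omega
  -- cover : every element of S is m, or in the base set
  have hcover : ∀ x ∈ S, x = m ∨ x ∈ insert (2*m) ((Icc 1 (m-1)).image h') := by
    intro x hx
    have hx1 : 1 ≤ x := hpos x hx
    have hx2 : x ≤ 2*m := hub x hx
    by_cases hc1 : x ≤ m - 1
    · right
      apply Finset.mem_insert_of_mem
      apply Finset.mem_image.mpr
      refine ⟨x, Finset.mem_Icc.mpr ⟨hx1, hc1⟩, ?_⟩
      simp [hh', hx]
    · by_cases hc2 : x = m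
      · left; exact hc2
      · by_cases hc3 : x = 2*m
        · right; rw [hc3]; exact Finset.mem_insert_self _ _
        · right
          apply Finset.mem_insert_of_mem
          apply Finset.mem_image.mpr
          refine ⟨2*m - x, Finset.mem_Icc.mpr ⟨by omega, by omega⟩, ?_⟩
          have hnotS : 2*m - x ∉ S := by
            intro hcon
            have hxx : 2*m - (2*m - x) ∈ S := by
              have he2 : 2*m - (2*m - x) = x := by omega
              rw [he2]; exact hx
            exact bothEmpty (2*m - x) (by omega) (by omega) ⟨hcon, hxx⟩
          simp only [hh', if_neg hnotS]
          omega
  -- Q and R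
  set Q : Finset ℕ := (Icc 1 (m-1)).filter (fun a => ¬ (a ∈ S)) with hQ
  set R : Finset ℕ := (Icc 1 (m-1)).filter (fun a => a ∈ S) with hR
  have hQR : ∑ a ∈ R, a + ∑ a ∈ Q, a = T (m-1) := by
    rw [Finset.sum_filter_add_sum_filter_not, sum_Icc_id]
  have hsplit : ∑ a ∈ Icc 1 (m-1), h' a = ∑ a ∈ R, a + ∑ a ∈ Q, (2*m - a) := by
    have e1 : ∑ a ∈ R, h' a = ∑ a ∈ R, a := by
      apply Finset.sum_congr rfl
      intro a ha
      rw [hR, Finset.mem_filter] at ha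
      simp [hh', ha.2]
    have e2 : ∑ a ∈ Q, h' a = ∑ a ∈ Q, (2*m - a) := by
      apply Finset.sum_congr rfl
      intro a ha
      rw [hQ, Finset.mem_filter] at ha
      simp [hh', ha.2]
    rw [← e1, ← e2, hR, hQ]
    exact (Finset.sum_filter_add_sum_filter_not (Icc 1 (m-1)) (fun a => a ∈ S) h').symm
  have hQsum : ∑ a ∈ Q, (2*m - a) = ∑ a ∈ Q, a + ∑ a ∈ Q, (2*m - 2*a) := by
    rw [← Finset.sum_add_distrib]
    apply Finset.sum_congr rfl
    intro a ha
    rw [hQ, Finset.mem_filter, mem_Icc] at ha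
    omega
  have himage_eq : (Icc 1 (m-1)).image h' = R ∪ Q.image (fun a => 2*m - a) := by
    conv_lhs => rw [← Finset.filter_union_filter_not_eq (fun a => a ∈ S) (Icc 1 (m-1))]
    rw [Finset.image_union]
    congr 1
    · rw [← hR]
      have : ∀ a ∈ R, h' a = a := by
        intro a ha
        rw [hR, Finset.mem_filter] at ha
        simp [hh', ha.2]
      calc R.image h' = R.image id := Finset.image_congr this
      _ = R := Finset.image_id
    · rw [← hQ]
      have hcg : ∀ a ∈ Q, h' a = 2*m - a := by
        intro a ha
        rw [hQ, Finset.mem_filter] at ha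
        simp [hh', ha.2]
      exact Finset.image_congr hcg
  by_cases hmS : m ∈ S
  · -- special case
    left
    have hmnotbase : m ∉ insert (2*m) ((Icc 1 (m-1)).image h') := by
      intro hcon
      rcases Finset.mem_insert.mp hcon with he | hcon
      · omega
      · obtain ⟨a, ha, hae⟩ := Finset.mem_image.mp hcon
        simp only [mem_Icc] at ha
        simp only [hh'] at hae
        split_ifs at hae <;> omega
    have hdec : S = insert m (insert (2*m) ((Icc 1 (m-1)).image h')) := by
      apply Finset.Subset.antisymm
      · intro x hx
        rcases hcover x hx with rfl | hx'
        · exact Finset.mem_insert_self _ _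
        · exact Finset.mem_insert_of_mem hx'
      · intro x hx
        rcases Finset.mem_insert.mp hx with rfl | hx'
        · exact hmS
        · exact hbase hx'
    have hsum2 : ∑ x ∈ S, x = m + (2*m + ∑ a ∈ Icc 1 (m-1), h' a) := by
      rw [hdec, Finset.sum_insert hmnotbase, Finset.sum_insert h2mnotmem,
        Finset.sum_image hinj]
    have hSid : S.sum id = ∑ x ∈ S, x := rfl
    rw [hsplit, hQsum] at hsum2
    have hkey : m + ∑ a ∈ Q, (2*m - 2*a) = 2*k := by omega
    have hm2k : m = 2*k := by omega
    have hQempty : Q = ∅ := by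
      by_contra hQne
      obtain ⟨a, ha⟩ := Finset.nonempty_iff_ne_empty.mpr hQne
      have hterm : 2*m - 2*a = 0 := by
        have hz : ∑ a ∈ Q, (2*m - 2*a) = 0 := by omega
        exact (Finset.sum_eq_zero_iff.mp hz) a ha
      rw [hQ, Finset.mem_filter, mem_Icc] at ha
      omega
    have hIccS : ∀ a, 1 ≤ a → a ≤ m - 1 → a ∈ S := by
      intro a ha1 ha2
      by_contra hcon
      have : a ∈ Q := by
        rw [hQ, Finset.mem_filter, mem_Icc]; exact ⟨⟨ha1, ha2⟩, hcon⟩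
      rw [hQempty] at this
      exact absurd this (Finset.notMem_empty a)
    refine ⟨hm2k, ?_⟩
    apply Finset.Subset.antisymm
    · intro x hx
      have hx1 : 1 ≤ x := hpos x hx
      have hx2 : x ≤ 2*m := hub x hx
      rcases hcover x hx with rfl | hx'
      · simp only [Finset.mem_union, mem_Icc]; left; omega
      · rcases Finset.mem_insert.mp hx' with rfl | hx''
        · simp
        · obtain ⟨a, ha, rfl⟩ := Finset.mem_image.mp hx''
          simp only [mem_Icc] at ha
          have haS : a ∈ S := hIccS a ha.1 ha.2
          simp only [hh', if_pos haS, Finset.mem_union, mem_Icc]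
          left; omega
    · intro x hx
      simp only [Finset.mem_union, mem_Icc, Finset.mem_singleton] at hx
      rcases hx with ⟨h1, h2⟩ | rfl
      · by_cases hxm : x = m
        · rw [hxm]; exact hmS
        · exact hIccS x h1 (by omega)
      · exact h2m
  · -- famP case
    right
    have hdec : S = insert (2*m) ((Icc 1 (m-1)).image h') := by
      apply Finset.Subset.antisymm
      · intro x hx
        rcases hcover x hx with rfl | hx'
        · exact absurd hx hmS
        · exact hx'
      · exact hbase
    have hsum2 : ∑ x ∈ S, x = 2*m + ∑ a ∈ Icc 1 (m-1), h' a := by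
      rw [hdec, Finset.sum_insert h2mnotmem, Finset.sum_image hinj]
    have hSid : S.sum id = ∑ x ∈ S, x := rfl
    rw [hsplit, hQsum] at hsum2
    have hkey : ∑ a ∈ Q, (2*m - 2*a) = 2*k := by omega
    have hQbound : ∀ a ∈ Q, 1 ≤ a ∧ a ≤ m - 1 ∧ a ∉ S := by
      intro a ha
      rw [hQ, Finset.mem_filter, mem_Icc] at ha
      exact ⟨ha.1.1, ha.1.2, ha.2⟩
    set P : Finset ℕ := Q.image (fun a => m - a) with hP
    have hQinj : ∀ a ∈ Q, ∀ b ∈ Q, m - a = m - b → a = b := by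
      intro a ha b hb hab
      have := hQbound a ha; have := hQbound b hb
      omega
    have hPsum : ∑ a ∈ P, a = k := by
      rw [hP, Finset.sum_image hQinj]
      have : ∑ a ∈ Q, (2*m - 2*a) = 2 * ∑ a ∈ Q, (m - a) := by
        rw [Finset.mul_sum]
        apply Finset.sum_congr rfl
        intro a ha
        have := hQbound a ha
        omega
      omega
    have hPpos : ∀ a ∈ P, 0 < a := by
      intro a ha
      rw [hP, Finset.mem_image] at ha
      obtain ⟨b, hb, rfl⟩ := ha
      have := hQbound b hb
      omega
    have hPQ : P.image (fun a => m - a) = Q := by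
      rw [hP, Finset.image_image]
      have : ∀ a ∈ Q, (((fun a => m - a) ∘ (fun a => m - a)) a) = id a := by
        intro a ha
        have := hQbound a ha
        simp only [Function.comp_apply, id]
        omega
      rw [Finset.image_congr this, Finset.image_id]
    have hPQ2 : P.image (fun a => m + a) = Q.image (fun a => 2*m - a) := by
      rw [hP, Finset.image_image]
      apply Finset.image_congr
      intro a ha
      have := hQbound a ha
      simp only [Function.comp_apply]
      omega
    have hRQ : Icc 1 (m-1) \ Q = R := by
      rw [hQ, Finset.filter_not, Finset.sdiff_sdiff_self_left]
      rw [hR]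
      exact Finset.inter_eq_right.mpr (Finset.filter_subset _ _)
    have hSfam : S = famP m P := by
      rw [hdec, himage_eq]
      unfold famP
      rw [hPQ, hPQ2, hRQ]
      ext x
      simp only [Finset.mem_insert, Finset.mem_union, Finset.mem_singleton]
      tauto
    have hQne : Q.Nonempty := by
      by_contra hcon
      rw [Finset.not_nonempty_iff_eq_empty] at hcon
      rw [hcon, Finset.sum_empty] at hkey
      omega
    have hPne : P.Nonempty := hQne.image _
    refine ⟨P, hPpos, hPsum, hSfam, ?_⟩
    rcases Nat.lt_or_ge P.card 2 with hc | hc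
    · right
      have hc1 : P.card = 1 := by
        have := Finset.card_pos.mpr hPne
        omega
      obtain ⟨b, hb⟩ := Finset.card_eq_one.mp hc1
      have hbk : b = k := by
        rw [hb, Finset.sum_singleton] at hPsum
        exact hPsum
      rw [hb, hbk]
      refine ⟨rfl, ?_⟩
      -- if m = 2k, S would be refinable
      intro hm2k
      have hkP : k ∈ P := by rw [hb, hbk]; exact Finset.mem_singleton_self k
      have hmkQ : m - k ∈ Q := by
        rw [← hPQ]
        exact Finset.mem_image_of_mem _ hkP
      have hknotS : m - k ∉ S := (hQbound _ hmkQ).2.2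
      have h1 : m - k ∈ Missing S := by
        rw [Missing, hsup, mem_sdiff, mem_Icc]
        exact ⟨⟨by omega, by omega⟩, hknotS⟩
      have h2 : m ∈ Missing S := by
        rw [Missing, hsup, mem_sdiff, mem_Icc]
        exact ⟨⟨by omega, by omega⟩, hmS⟩
      have h3 : m - k ≠ m := by omega
      have := hunref (m - k) h1 m h2 h3
      apply this
      have hmemS : m + k ∈ S := by
        rw [hSfam]
        unfold famP
        apply Finset.mem_union_left
        apply Finset.mem_union_right
        apply Finset.mem_image.mpr
        exact ⟨k, hkP, rfl⟩
      have he : m - k + m = m + k := by omega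
      rw [he]
      exact hmemS
    · left; exact hc

end classify
section count
variable {m k : ℕ} (hm : 2*k ≤ m) (hk : 4 ≤ k)

include hm hk in
lemma famP_pos {P : Finset ℕ} (hpos : ∀ a ∈ P, 0 < a) :
    ∀ x ∈ famP m P, 0 < x := by
  intro x hx
  rw [famP_mem_iff] at hx
  rcases hx with ⟨⟨h1, _⟩, _⟩ | ⟨a, ha, rfl⟩ | rfl <;> omega

include hm hk in
lemma one_mem_famP {P : Finset ℕ} (hpos : ∀ a ∈ P, 0 < a) (hsum : ∑ a ∈ P, a = k) :
    1 ∈ famP m P := by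
  rw [famP_mem_iff]
  left
  refine ⟨⟨le_refl 1, by omega⟩, ?_⟩
  intro a ha
  have := hble hpos hsum a ha
  omega

include hm hk in
lemma famP_card {P : Finset ℕ} (hpos : ∀ a ∈ P, 0 < a) (hsum : ∑ a ∈ P, a = k) :
    2 ≤ (famP m P).card := by
  have h1 := one_mem_famP hm hk hpos hsum
  have h2 : 2*m ∈ famP m P := mem_famP_2m
  have := Finset.one_lt_card.mpr ⟨1, h1, 2*m, h2, by omega⟩
  omega

include hm hk in
lemma m_not_mem_famP {P : Finset ℕ} (hpos : ∀ a ∈ P, 0 < a) : m ∉ famP m P := by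
  rw [famP_mem_iff]
  push_neg
  refine ⟨fun h => by omega, fun a ha => ?_, by omega⟩
  have := hpos a ha
  omega

include hm hk in
lemma famP_filter_large {P : Finset ℕ} (hpos : ∀ a ∈ P, 0 < a) (hsum : ∑ a ∈ P, a = k) :
    (famP m P).filter (fun x => m < x ∧ x < 2*m) = P.image (fun a => m + a) := by
  ext x
  rw [Finset.mem_filter, famP_mem_iff, Finset.mem_image]
  constructor
  · rintro ⟨⟨⟨h1, h2⟩, _⟩ | ⟨a, ha, rfl⟩ | rfl, hb⟩
    · omega
    · exact ⟨a, ha, rfl⟩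
    · omega
  · rintro ⟨a, ha, rfl⟩
    have := hble hpos hsum a ha
    refine ⟨Or.inr (Or.inl ⟨a, ha, rfl⟩), by omega, by omega⟩

include hm hk in
lemma famP_inj {P P' : Finset ℕ} (hpos : ∀ a ∈ P, 0 < a) (hsum : ∑ a ∈ P, a = k)
    (hpos' : ∀ a ∈ P', 0 < a) (hsum' : ∑ a ∈ P', a = k)
    (h : famP m P = famP m P') : P = P' := by
  have h1 := famP_filter_large hm hk hpos hsum
  have h2 := famP_filter_large hm hk hpos' hsum'
  rw [h, h2] at h1
  have recov : ∀ (Q : Finset ℕ),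
      Finset.image (fun x => x - m) (Finset.image (fun a => m + a) Q) = Q := by
    intro Q
    rw [Finset.image_image]
    have : ∀ a ∈ Q, ((fun x => x - m) ∘ (fun a => m + a)) a = id a := by
      intro a _; simp only [Function.comp_apply, id]; omega
    rw [Finset.image_congr this, Finset.image_id]
  have e := congrArg (Finset.image (fun x => x - m)) h1
  rw [recov P', recov P] at e
  exact e.symm

include hm hk in
lemma special_unref (hm2k : m = 2*k) :
    UnrefinablePartition (T m + m + 2*k) (Icc 1 m ∪ {2*m}) ∧
      (Icc 1 m ∪ {2*m}).sup id = 2*m := by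
  have hdisj : Disjoint (Icc 1 m) ({2*m} : Finset ℕ) := by
    rw [Finset.disjoint_right]
    intro x hx hx'
    simp only [Finset.mem_singleton] at hx
    simp only [mem_Icc] at hx'
    omega
  have hsub : ∀ x ∈ Icc 1 m ∪ {2*m}, x = 2*m ∨ (1 ≤ x ∧ x ≤ m) := by
    intro x hx
    rcases Finset.mem_union.mp hx with hx | hx
    · right; exact Finset.mem_Icc.mp hx
    · left; exact Finset.mem_singleton.mp hx
  have hsup : (Icc 1 m ∪ {2*m}).sup id = 2*m := by
    apply le_antisymm
    · apply Finset.sup_le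
      intro x hx
      rcases hsub x hx with rfl | ⟨_, h⟩
      · exact le_refl _
      · simp only [id]; omega
    · exact Finset.le_sup (f := id)
        (Finset.mem_union_right _ (Finset.mem_singleton_self _))
  refine ⟨⟨⟨?_, ?_, ?_⟩, ?_⟩, hsup⟩
  · intro x hx
    rcases hsub x hx with rfl | ⟨h, _⟩ <;> omega
  · have h1 : (1:ℕ) ∈ Icc 1 m ∪ {2*m} :=
      Finset.mem_union_left _ (Finset.mem_Icc.mpr ⟨le_refl 1, by omega⟩)
    have h2 : 2*m ∈ Icc 1 m ∪ {2*m} :=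
      Finset.mem_union_right _ (Finset.mem_singleton_self _)
    have := Finset.one_lt_card.mpr ⟨1, h1, 2*m, h2, by omega⟩
    omega
  · have : (Icc 1 m ∪ {2*m}).sum id = ∑ x ∈ Icc 1 m, x + 2*m := by
      rw [Finset.sum_union hdisj, Finset.sum_singleton]
      rfl
    rw [this, sum_Icc_id]
    omega
  · intro x hx y hy hxy hxyS
    rw [Missing, hsup, mem_sdiff, mem_Icc] at hx hy
    have hx' : m + 1 ≤ x ∧ x ≤ 2*m - 1 := by
      rcases hx with ⟨⟨h1, h2⟩, h3⟩
      by_contra hc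
      apply h3
      by_cases hxm : x ≤ m
      · exact Finset.mem_union_left _ (Finset.mem_Icc.mpr ⟨h1, hxm⟩)
      · have : x = 2*m := by omega
        rw [this]
        exact Finset.mem_union_right _ (Finset.mem_singleton_self _)
    have hy' : m + 1 ≤ y ∧ y ≤ 2*m - 1 := by
      rcases hy with ⟨⟨h1, h2⟩, h3⟩
      by_contra hc
      apply h3
      by_cases hym : y ≤ m
      · exact Finset.mem_union_left _ (Finset.mem_Icc.mpr ⟨h1, hym⟩)
      · have : y = 2*m := by omega
        rw [this]
        exact Finset.mem_union_right _ (Finset.mem_singleton_self _)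
    rcases hsub _ hxyS with he | ⟨_, he⟩ <;> omega

include hm hk in
lemma famP_all {P : Finset ℕ} (hpos : ∀ a ∈ P, 0 < a) (hsum : ∑ a ∈ P, a = k)
    (hmk : ¬(m = 2*k ∧ k ∈ P)) :
    UnrefinablePartition (T m + m + 2*k) (famP m P) ∧ (famP m P).sup id = 2*m := by
  refine ⟨⟨⟨famP_pos hm hk hpos, famP_card hm hk hpos hsum, ?_⟩,
    famP_unrefinable hm hk hpos hsum hmk⟩, famP_sup hm hk hpos hsum⟩
  exact famP_sum hm hk hpos hsum

lemma distinct_k_not_mem {P : Finset ℕ} (hP : DistinctPartition k P) : k ∉ P := by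
  obtain ⟨hpos, hcard, hsum⟩ := hP
  intro hkP
  obtain ⟨b, hb, hbk⟩ := Finset.exists_mem_ne (show 1 < P.card by omega) k
  have := two_parts_le hsum hb hkP hbk
  have := hpos b hb
  omega

include hm hk in
lemma count_eq :
    {S : Finset ℕ | MaximalUnrefinable (T m + m + 2*k) S}.ncard =
      1 + {S : Finset ℕ | DistinctPartition k S}.ncard := by
  classical
  set Sp : Finset ℕ := if m = 2*k then Icc 1 m ∪ {2*m} else famP m {k} with hSp
  have hSpfact : UnrefinablePartition (T m + m + 2*k) Sp ∧ Sp.sup id = 2*m := by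
    by_cases hc : m = 2*k
    · rw [hSp, if_pos hc]
      exact special_unref hm hk hc
    · rw [hSp, if_neg hc]
      refine famP_all hm hk ?_ ?_ ?_
      · intro a ha; rw [Finset.mem_singleton] at ha; omega
      · rw [Finset.sum_singleton]
      · tauto
  have hfam : ∀ P : Finset ℕ, DistinctPartition k P →
      UnrefinablePartition (T m + m + 2*k) (famP m P) ∧ (famP m P).sup id = 2*m := by
    intro P hP
    obtain ⟨hpos, hcard, hsum⟩ := hP
    refine famP_all hm hk hpos hsum ?_
    rintro ⟨_, hkP⟩
    exact distinct_k_not_mem ⟨hpos, hcard, hsum⟩ hkP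
  have hset : {S : Finset ℕ | MaximalUnrefinable (T m + m + 2*k) S} =
      insert Sp (famP m '' {P : Finset ℕ | DistinctPartition k P}) := by
    ext S
    simp only [Set.mem_setOf_eq, Set.mem_insert_iff, Set.mem_image]
    constructor
    · rintro ⟨hup, hmax⟩
      have hsup : S.sup id = 2*m := by
        have h1 := sup_le_two_m hm hk hup
        have h2 := hmax Sp hSpfact.1
        rw [hSpfact.2] at h2
        omega
      rcases classify hm hk hup hsup with ⟨hm2k, hSeq⟩ | ⟨P, hpos, hsum, hSeq, hcase⟩
      · left; rw [hSp, if_pos hm2k]; exact hSeq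
      · rcases hcase with hc2 | ⟨hPk, hne⟩
        · right; exact ⟨P, ⟨hpos, hc2, hsum⟩, hSeq.symm⟩
        · left; rw [hSp, if_neg hne, ← hPk]; exact hSeq
    · intro h
      rcases h with rfl | ⟨P, hP, rfl⟩
      · exact ⟨hSpfact.1, fun S' h' => by
          rw [hSpfact.2]; exact sup_le_two_m hm hk h'⟩
      · exact ⟨(hfam P hP).1, fun S' h' => by
          rw [(hfam P hP).2]; exact sup_le_two_m hm hk h'⟩
  have hfin : {P : Finset ℕ | DistinctPartition k P}.Finite := by
    apply Set.Finite.subset (Finset.finite_toSet ((Icc 1 k).powerset))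
    intro P hP
    simp only [Set.mem_setOf_eq] at hP
    obtain ⟨hpos, _, hsum⟩ := hP
    rw [Finset.mem_coe, Finset.mem_powerset]
    intro a ha
    have := hble hpos hsum a ha
    rw [mem_Icc]; omega
  have hinjOn : Set.InjOn (famP m) {P : Finset ℕ | DistinctPartition k P} := by
    intro P hP P' hP' h
    simp only [Set.mem_setOf_eq] at hP hP'
    exact famP_inj hm hk hP.1 hP.2.2 hP'.1 hP'.2.2 h
  have hnotmem : Sp ∉ famP m '' {P : Finset ℕ | DistinctPartition k P} := by
    rintro ⟨P, hP, hPe⟩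
    simp only [Set.mem_setOf_eq] at hP
    by_cases hc : m = 2*k
    · have hmSp : m ∈ Sp := by
        rw [hSp, if_pos hc]
        exact Finset.mem_union_left _ (Finset.mem_Icc.mpr ⟨by omega, le_refl m⟩)
      rw [← hPe] at hmSp
      exact m_not_mem_famP hm hk hP.1 hmSp
    · rw [hSp, if_neg hc] at hPe
      have : P = {k} := by
        apply famP_inj hm hk hP.1 hP.2.2 ?_ ?_ hPe
        · intro a ha; rw [Finset.mem_singleton] at ha; omega
        · rw [Finset.sum_singleton]
      have hcard := hP.2.1
      rw [this, Finset.card_singleton] at hcard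
      omega
  rw [hset, Set.ncard_insert_of_notMem hnotmem (hfin.image _),
    Set.ncard_image_of_injOn hinjOn]
  omega

end count

theorem count_d_odd_distance (n d k : ℕ) (hn : 11 ≤ n) (hk : 1 ≤ k)
    (hdk : d = n - (2 * k - 1)) (hd1 : 3 ≤ d) (hd2 : d ≤ n - 7) :
    {S : Finset ℕ | MaximalUnrefinable (T n - d) S}.ncard =
      1 + {S : Finset ℕ | DistinctPartition k S}.ncard := by
  have hk4 : 4 ≤ k := by omega
  set m := n - 2 with hmdef
  have hm : 2*k ≤ m := by omega
  have hT : T n - d = T m + m + 2*k := by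
    have h1 : T (m+1) = T m + (m+1) := T_add_one m
    have h2 : T (m+1+1) = T (m+1) + (m+1+1) := T_add_one (m+1)
    have h3 : n = m + 2 := by omega
    rw [h3]
    have h4 : m + 2 = m + 1 + 1 := by omega
    rw [h4]
    omega
  rw [hT]
  exact count_eq hm hk4
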